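/- Let α be a finite alphabet and let E, G, H be regular languages over α. Then there exist a number n ≥ 1 and union-free languages E_1, …, E_n over α such that E·G∗·H = ⋃_{i=1}^{n} E_i·G∗·H. -/

import Mathlib

open Language Computability

universe u

variable {α : Type}

/-- The n-fold repetition (power) of a word. -/
def wordPow (y : List α) : ℕ → List α
  | 0 => []
  | n + 1 => y ++ wordPow y n

/-- A star language: the Kleene star of some regular language. -/
def IsStarLang (L : Language α) : Prop :=
  ∃ H : Language α, H.IsRegular ∧ L = H∗

/-- A left-sided comet. -/
def IsLeftComet (L : Language α) : Prop :=
  ∃ E G : Language α, E.IsRegular ∧ G.IsRegular ∧ G ≠ 0 ∧ G ≠ 1 ∧ L = E * G∗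

/-- A right-sided comet. -/
def IsRightComet (L : Language α) : Prop :=
  ∃ G H : Language α, G.IsRegular ∧ H.IsRegular ∧ G ≠ 0 ∧ G ≠ 1 ∧ L = G∗ * H

/-- A two-sided comet. -/
def IsTwoComet (L : Language α) : Prop :=
  ∃ E G H : Language α, E.IsRegular ∧ G.IsRegular ∧ H.IsRegular ∧
    G ≠ 0 ∧ G ≠ 1 ∧ L = E * G∗ * H

/-- A regular expression is union-free if it is built from the atoms `0` (empty language)
and single letters using only concatenation and Kleene star. -/
def RegularExpression.UnionFree : RegularExpression α → Prop
  | RegularExpression.zero => True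
  | RegularExpression.epsilon => False
  | RegularExpression.char _ => True
  | RegularExpression.plus _ _ => False
  | RegularExpression.comp r s => r.UnionFree ∧ s.UnionFree
  | RegularExpression.star r => r.UnionFree

/-- A union-free language: the language of a union-free regular expression. -/
def IsUnionFree (L : Language α) : Prop :=
  ∃ r : RegularExpression α, r.UnionFree ∧ r.matches' = L

/-- A monoidal language. -/
def IsMonoidal (L : Language α) : Prop := L = (⊤ : Language α)

/-- The language of one-letter words with letters from `X`. -/
def lettersLang (X : Set α) : Language α := {w : List α | ∃ a ∈ X, w = [a]}

/-- A combinational language: `⊤ · X` for a set `X` of one-letter words. -/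
def IsCombinational (L : Language α) : Prop :=
  ∃ X : Set α, L = (⊤ : Language α) * lettersLang X

/-- A symmetric definite language: `E · ⊤ · H` with `E, H` regular. -/
def IsSymDef (L : Language α) : Prop :=
  ∃ E H : Language α, E.IsRegular ∧ H.IsRegular ∧ L = E * (⊤ : Language α) * H

/-- A nilpotent language: finite or with finite complement. -/
def IsNilpotentLang (L : Language α) : Prop := L.Finite ∨ (Lᶜ : Language α).Finite

/-- A definite language: `A ∪ ⊤ · B` with `A, B` finite. -/
def IsDefinite (L : Language α) : Prop :=
  ∃ A B : Language α, A.Finite ∧ B.Finite ∧ L = A + (⊤ : Language α) * B  -- `+` of languages is union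

/-- An ordered language: accepted by a DFA with linearly ordered state set
whose transition maps are all monotone. -/
def IsOrdered (L : Language α) : Prop :=
  ∃ (σ : Type) (_ : Fintype σ) (_ : LinearOrder σ) (M : DFA α σ),
    (∀ a : α, Monotone fun q => M.step q a) ∧ M.accepts = L

/-- The non-counting property. -/
def HasNonCounting (L : Language α) : Prop :=
  ∃ k : ℕ, 1 ≤ k ∧ ∀ x y z : List α,
    (x ++ wordPow y k ++ z ∈ L ↔ x ++ wordPow y (k + 1) ++ z ∈ L)

/-- A non-counting (star-free) regular language. -/
def IsNonCounting (L : Language α) : Prop := L.IsRegular ∧ HasNonCounting L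

/-- The power-separating property. -/
def HasPowerSep (L : Language α) : Prop :=
  ∃ m : ℕ, 1 ≤ m ∧ ∀ x : List α,
    (∀ n, m ≤ n → wordPow x n ∉ L) ∨ (∀ n, m ≤ n → wordPow x n ∈ L)

/-- A power-separating regular language. -/
def IsPowerSep (L : Language α) : Prop := L.IsRegular ∧ HasPowerSep L

/-- A suffix-closed (regular) language. -/
def IsSuffixClosed (L : Language α) : Prop :=
  L.IsRegular ∧ ∀ x y : List α, x ++ y ∈ L → y ∈ L

/-- A circular (regular) language. -/
def IsCircular (L : Language α) : Prop :=
  L.IsRegular ∧ ∀ u v : List α, u ++ v ∈ L → v ++ u ∈ L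

/-- A commutative (regular) language. -/
def IsCommutative (L : Language α) : Prop :=
  L.IsRegular ∧ ∀ w ∈ L, ∀ v : List α, w.Perm v → v ∈ L

/-- The reversal of a language. -/
def Reversal (L : Language α) : Language α := {w : List α | ∃ v ∈ L, w = v.reverse}

/-- Two families of languages are incomparable if neither is contained in the other. -/
def Incomparable (P Q : Language α → Prop) : Prop :=
  (∃ L : Language α, P L ∧ ¬ Q L) ∧ (∃ L : Language α, Q L ∧ ¬ P L)

/-- A finite language. -/
def IsFiniteLang (L : Language α) : Prop := L.Finite

section Aux

open RegularExpression in
lemma uf_zero : IsUnionFree (0 : Language α) := ⟨.zero, trivial, rfl⟩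

open RegularExpression in
lemma uf_one : IsUnionFree (1 : Language α) :=
  ⟨.star .zero, trivial, by simp [matches']⟩

open RegularExpression in
lemma uf_char (a : α) : IsUnionFree ({[a]} : Language α) := ⟨.char a, trivial, rfl⟩

open RegularExpression in
lemma uf_mul {L M : Language α} (hL : IsUnionFree L) (hM : IsUnionFree M) :
    IsUnionFree (L * M) := by
  obtain ⟨r, hr, hrL⟩ := hL
  obtain ⟨s, hs, hsM⟩ := hM
  exact ⟨.comp r s, ⟨hr, hs⟩, by simp [matches', hrL, hsM]⟩

open RegularExpression in
lemma uf_star {L : Language α} (hL : IsUnionFree L) : IsUnionFree (L∗) := by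
  obtain ⟨r, hr, hrL⟩ := hL
  exact ⟨.star r, hr, by simp [matches', hrL]⟩

lemma mem_of_lang_le {L M : Language α} (h : L ≤ M) {x : List α} (hx : x ∈ L) : x ∈ M := h hx

/-- Finite (nonempty) union of union-free languages. -/
def FUF (L : Language α) : Prop :=
  ∃ l : List (Language α), l ≠ [] ∧ (∀ A ∈ l, IsUnionFree A) ∧ L = l.sum

lemma mem_list_sum {l : List (Language α)} {x : List α} :
    x ∈ l.sum ↔ ∃ A ∈ l, x ∈ A := by
  induction l with
  | nil =>
    exact ⟨fun h => absurd h (Language.notMem_zero x),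
      fun ⟨A, hA, _⟩ => absurd hA List.not_mem_nil⟩
  | cons A l ih =>
    rw [List.sum_cons]
    constructor
    · intro h
      rcases (Language.mem_add _ _ _).1 h with h | h
      · exact ⟨A, by simp, h⟩
      · obtain ⟨B, hB, hxB⟩ := ih.1 h
        exact ⟨B, by simp [hB], hxB⟩
    · rintro ⟨B, hB, hxB⟩
      rcases List.mem_cons.1 hB with rfl | hB
      · exact (Language.mem_add _ _ _).2 (Or.inl hxB)
      · exact (Language.mem_add _ _ _).2 (Or.inr (ih.2 ⟨B, hB, hxB⟩))

lemma le_list_sum {l : List (Language α)} {A : Language α} (hA : A ∈ l) : A ≤ l.sum := by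
  intro x hx; exact mem_list_sum.2 ⟨A, hA, hx⟩

lemma list_sum_le {l : List (Language α)} {K : Language α} (h : ∀ A ∈ l, A ≤ K) :
    l.sum ≤ K := by
  intro x hx
  obtain ⟨A, hAl, hxA⟩ := mem_list_sum.1 hx
  exact h A hAl hxA

lemma one_le_list_prod {l : List (Language α)} (h1 : ∀ A ∈ l, 1 ≤ A) :
    (1 : Language α) ≤ l.prod := by
  induction l with
  | nil => simp
  | cons B l ih =>
    rw [List.prod_cons]
    calc (1 : Language α) = 1 * 1 := (one_mul 1).symm
      _ ≤ B * l.prod := mul_le_mul' (h1 B (by simp))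
          (ih fun A hA => h1 A (by simp [hA]))

lemma le_list_prod {l : List (Language α)} (h1 : ∀ A ∈ l, 1 ≤ A) :
    ∀ A ∈ l, A ≤ l.prod := by
  induction l with
  | nil => simp
  | cons B l ih =>
    intro A hA
    rw [List.prod_cons]
    rcases List.mem_cons.1 hA with rfl | hA
    · calc A = A * 1 := (mul_one A).symm
        _ ≤ A * l.prod := mul_le_mul' le_rfl
            (one_le_list_prod fun A hA => h1 A (by simp [hA]))
    · calc A ≤ l.prod := ih (fun A hA => h1 A (by simp [hA])) A hA
        _ = 1 * l.prod := (one_mul _).symm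
        _ ≤ B * l.prod := mul_le_mul' (h1 B (by simp)) le_rfl

lemma list_prod_le {l : List (Language α)} {K : Language α} (hK1 : (1 : Language α) ≤ K)
    (hKK : K * K ≤ K) (h : ∀ A ∈ l, A ≤ K) : l.prod ≤ K := by
  induction l with
  | nil => simpa using hK1
  | cons B l ih =>
    rw [List.prod_cons]
    calc B * l.prod ≤ K * K :=
        mul_le_mul' (h B (by simp)) (ih (fun A hA => h A (by simp [hA])))
      _ ≤ K := hKK

lemma sum_kstar_eq (l : List (Language α)) :
    (l.sum)∗ = ((l.map (·∗)).prod)∗ := by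
  apply le_antisymm
  · apply kstar_mono
    apply list_sum_le
    intro A hA
    calc A ≤ A∗ := le_kstar
      _ ≤ (l.map (·∗)).prod := by
        refine le_list_prod ?_ _ (List.mem_map.2 ⟨A, hA, rfl⟩)
        intro B hB
        obtain ⟨C, _, rfl⟩ := List.mem_map.1 hB
        exact one_le_kstar
  · have h1 : (l.map (·∗)).prod ≤ (l.sum)∗ := by
      apply list_prod_le one_le_kstar (kstar_mul_kstar _).le
      intro B hB
      obtain ⟨C, hC, rfl⟩ := List.mem_map.1 hB
      exact kstar_mono (le_list_sum hC)
    exact (kstar_mono h1).trans (kstar_idem _).le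

lemma fuf_zero : FUF (0 : Language α) := ⟨[0], by simp, by simp [uf_zero], by simp⟩

lemma fuf_add {L M : Language α} (hL : FUF L) (hM : FUF M) : FUF (L + M) := by
  obtain ⟨l, hl0, hl, rfl⟩ := hL
  obtain ⟨m, hm0, hm, rfl⟩ := hM
  refine ⟨l ++ m, by simp [hl0], ?_, by rw [List.sum_append]⟩
  intro A hA
  rcases List.mem_append.1 hA with h | h
  exacts [hl A h, hm A h]

lemma mul_list_sum (A : Language α) (l : List (Language α)) :
    A * l.sum = (l.map (A * ·)).sum := by
  induction l with
  | nil => simp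
  | cons B l ih => rw [List.sum_cons, mul_add, ih, List.map_cons, List.sum_cons]

lemma sum_mul_sum (l m : List (Language α)) :
    l.sum * m.sum = (l.flatMap fun A => m.map (A * ·)).sum := by
  induction l with
  | nil => simp
  | cons A l ih =>
    rw [List.sum_cons, add_mul, List.flatMap_cons, List.sum_append, ih, mul_list_sum]

lemma fuf_mul {L M : Language α} (hL : FUF L) (hM : FUF M) : FUF (L * M) := by
  obtain ⟨l, hl0, hl, rfl⟩ := hL
  obtain ⟨m, hm0, hm, rfl⟩ := hM
  refine ⟨l.flatMap (fun A => m.map (A * ·)), ?_, ?_, sum_mul_sum l m⟩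
  · obtain ⟨A, l, rfl⟩ := List.exists_cons_of_ne_nil hl0
    obtain ⟨B, m', rfl⟩ := List.exists_cons_of_ne_nil hm0
    simp [List.flatMap_cons]
  · intro C hC
    obtain ⟨A, hA, hC⟩ := List.mem_flatMap.1 hC
    obtain ⟨B, hB, rfl⟩ := List.mem_map.1 hC
    exact uf_mul (hl A hA) (hm B hB)

lemma fuf_kstar {L : Language α} (hL : FUF L) : FUF (L∗) := by
  obtain ⟨l, hl0, hl, rfl⟩ := hL
  refine ⟨[((l.map (·∗)).prod)∗], by simp, ?_, by simp [sum_kstar_eq]⟩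
  intro A hA
  simp only [List.mem_singleton] at hA
  subst hA
  apply uf_star
  have : ∀ m : List (Language α), (∀ A ∈ m, IsUnionFree A) → IsUnionFree (m.map (·∗)).prod := by
    intro m
    induction m with
    | nil => intro _; simpa using uf_one
    | cons B m ih =>
      intro h
      rw [List.map_cons, List.prod_cons]
      exact uf_mul (uf_star (h B (by simp))) (ih (fun A hA => h A (by simp [hA])))
  exact this l hl

end Aux

section DFAPart

set_option linter.unusedSectionVars false

variable {σ : Type} [DecidableEq σ]

/-- Words leading from `s` to `t` all of whose strict intermediate states lie in `S`. -/
def pathLang (M : DFA α σ) (S : Finset σ) (s t : σ) : Language α :=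
  { w | M.evalFrom s w = t ∧ ∀ v : List α, v <+: w → v ≠ [] → v ≠ w → M.evalFrom s v ∈ S }

lemma nil_mem_pathLang (M : DFA α σ) (S : Finset σ) (s : σ) : [] ∈ pathLang M S s s := by
  refine ⟨rfl, ?_⟩
  intro v hv hne _
  exact absurd (List.prefix_nil.1 hv) hne

lemma pathLang_mono (M : DFA α σ) {S T : Finset σ} (h : S ⊆ T) (s t : σ) :
    pathLang M S s t ≤ pathLang M T s t := by
  intro w hw
  exact ⟨hw.1, fun v h1 h2 h3 => h (hw.2 v h1 h2 h3)⟩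

lemma glue_pathLang {M : DFA α σ} {S : Finset σ} {s q t : σ} (hq : q ∈ S)
    {x y : List α} (hx : x ∈ pathLang M S s q) (hy : y ∈ pathLang M S q t) :
    x ++ y ∈ pathLang M S s t := by
  have hev : M.evalFrom s (x ++ y) = t := by
    rw [DFA.evalFrom_of_append, hx.1, hy.1]
  refine ⟨hev, ?_⟩
  intro v hpre hne hnev
  rcases (List.prefix_or_prefix_of_prefix hpre (List.prefix_append x y)) with h | h
  · by_cases hvx : v = x
    · subst hvx; rw [hx.1]; exact hq
    · exact hx.2 v h hne hvx
  · obtain ⟨v', rfl⟩ := h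
    have hev' : M.evalFrom s (x ++ v') = M.evalFrom q v' := by
      rw [DFA.evalFrom_of_append, hx.1]
    by_cases hv0 : v' = []
    · subst hv0; simp only [List.append_nil]; rw [hx.1]; exact hq
    · have hv'y : v' <+: y := by
        obtain ⟨r, hr⟩ := hpre
        exact ⟨r, by simpa using hr⟩
      have hvny : v' ≠ y := fun h => hnev (by rw [h])
      rw [hev']
      exact hy.2 v' hv'y hv0 hvny

lemma kstar_pathLang_le {M : DFA α σ} {S : Finset σ} {q : σ} (hq : q ∈ S) :
    (pathLang M S q q)∗ ≤ pathLang M S q q := by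
  intro w hw
  obtain ⟨L, rfl, hL⟩ := Language.mem_kstar.1 hw
  clear hw
  induction L with
  | nil => exact nil_mem_pathLang M S q
  | cons a L ih =>
    rw [List.flatten_cons]
    exact glue_pathLang hq (hL a (by simp)) (ih (fun y hy => hL y (by simp [hy])))

lemma no_visit_pathLang {M : DFA α σ} {S : Finset σ} {q s t : σ} {w : List α}
    (hw : w ∈ pathLang M (insert q S) s t)
    (hK : ∀ k, 1 ≤ k → k < w.length → M.evalFrom s (List.take k w) ≠ q) :
    w ∈ pathLang M S s t := by
  refine ⟨hw.1, ?_⟩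
  intro v hpre hne hnev
  have h1 := hw.2 v hpre hne hnev
  rcases Finset.mem_insert.1 h1 with h | h
  · exfalso
    have htake : List.take v.length w = v := (List.prefix_iff_eq_take.1 hpre).symm
    have hlen : v.length < w.length := by
      rcases lt_or_eq_of_le hpre.length_le with h' | h'
      · exact h'
      · exact absurd (hpre.eq_of_length h') hnev
    have hpos : 1 ≤ v.length := by
      rcases Nat.eq_zero_or_pos v.length with h' | h'
      · exact absurd (List.length_eq_zero_iff.1 h') hne
      · exact h'
    exact hK v.length hpos hlen (by rw [htake]; exact h)
  · exact h

lemma path_insert_le (M : DFA α σ) (q : σ) (S : Finset σ) (t : σ) :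
    ∀ (n : ℕ) (w : List α), w.length ≤ n → ∀ s, w ∈ pathLang M (insert q S) s t →
      w ∈ pathLang M S s t +
        pathLang M S s q * (pathLang M S q q)∗ * pathLang M S q t := by
  intro n
  induction n with
  | zero =>
    intro w hlen s hw
    exact (Language.mem_add _ _ _).2 <| Or.inl <|
      no_visit_pathLang hw (by intro k hk hk'; omega)
  | succ n ih =>
    intro w hlen s hw
    classical
    by_cases hK : ∃ k, 1 ≤ k ∧ k < w.length ∧ M.evalFrom s (List.take k w) = q
    · obtain ⟨k0, hk0⟩ := hK
      have hKd : ∃ k, 1 ≤ k ∧ k < w.length ∧ M.evalFrom s (List.take k w) = q := ⟨k0, hk0⟩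
      obtain ⟨hk1, hklt, hkq⟩ := Nat.find_spec hKd
      set k := Nat.find hKd with hkdef
      set u := List.take k w with hu
      set v := List.drop k w with hv
      have huv : u ++ v = w := List.take_append_drop k w
      have hul : u.length = k := by rw [hu, List.length_take]; omega
      have hvl : v.length = w.length - k := by rw [hv, List.length_drop]
      -- u goes from s to q avoiding q strictly inside
      have hus : u ∈ pathLang M S s q := by
        refine ⟨hkq, ?_⟩
        intro p hpre hne hnep
        have hpu : p.length ≤ u.length := hpre.length_le
        have hplt : p.length < k := by
          rcases lt_or_eq_of_le hpu with h' | h'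
          · omega
          · exact absurd (hpre.eq_of_length h') hnep
        have hpw : p <+: w := hpre.trans (huv ▸ List.prefix_append u v)
        have hptake : List.take p.length w = p := (List.prefix_iff_eq_take.1 hpw).symm
        have hpnw : p ≠ w := by
          intro h; subst h; omega
        have h1 := hw.2 p hpw hne hpnw
        rcases Finset.mem_insert.1 h1 with h' | h'
        · exfalso
          have hpos : 1 ≤ p.length := by
            rcases Nat.eq_zero_or_pos p.length with h'' | h''
            · exact absurd (List.length_eq_zero_iff.1 h'') hne
            · exact h''
          exact Nat.find_min hKd hplt ⟨hpos, by omega, by rw [hptake]; exact h'⟩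
        · exact h'
      -- v goes from q to t inside insert q S
      have hvq : v ∈ pathLang M (insert q S) q t := by
        have hev : M.evalFrom q v = t := by
          have := hw.1
          rw [← huv, DFA.evalFrom_of_append, hkq] at this
          exact this
        refine ⟨hev, ?_⟩
        intro p hpre hne hnep
        have hupw : u ++ p <+: w := by
          rw [← huv]
          obtain ⟨r, hr⟩ := hpre
          exact ⟨r, by rw [List.append_assoc, hr]⟩
        have hne' : u ++ p ≠ [] := by simp [hne]
        have hnew : u ++ p ≠ w := by
          intro h
          have : (u ++ p).length = w.length := by rw [h]
          have hplen : p.length < v.length := by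
            rcases lt_or_eq_of_le hpre.length_le with h' | h'
            · exact h'
            · exact absurd (hpre.eq_of_length h') hnep
          rw [List.length_append] at this
          omega
        have h1 := hw.2 (u ++ p) hupw hne' hnew
        rw [DFA.evalFrom_of_append, hkq] at h1
        exact h1
      have hvlen : v.length ≤ n := by omega
      have hIH := ih v hvlen q hvq
      rcases (Language.mem_add _ _ _).1 hIH with hcase | hcase
      · refine (Language.mem_add _ _ _).2 (Or.inr ?_)
        have : (u ++ []) ++ v ∈
            pathLang M S s q * (pathLang M S q q)∗ * pathLang M S q t :=
          Language.append_mem_mul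
            (Language.append_mem_mul hus (Language.nil_mem_kstar _)) hcase
        simpa [huv] using this
      · obtain ⟨ab, ⟨m1, hm1, m2, hm2, rfl⟩, c, hc, hvdec⟩ := Language.mem_mul.1 hcase
        have hstar : m1 ++ m2 ∈ (pathLang M S q q)∗ := by
          rw [← kstar_mul_kstar (pathLang M S q q)]
          exact Language.append_mem_mul (mem_of_lang_le le_kstar hm1) hm2
        refine (Language.mem_add _ _ _).2 (Or.inr ?_)
        have : (u ++ (m1 ++ m2)) ++ c ∈
            pathLang M S s q * (pathLang M S q q)∗ * pathLang M S q t :=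
          Language.append_mem_mul (Language.append_mem_mul hus hstar) hc
        have heq : (u ++ (m1 ++ m2)) ++ c = w := by
          rw [List.append_assoc, hvdec, huv]
        rwa [heq] at this
    · exact (Language.mem_add _ _ _).2 <| Or.inl <|
        no_visit_pathLang hw (by intro k hk hk' hq'; exact hK ⟨k, hk, hk', hq'⟩)

lemma path_insert_eq (M : DFA α σ) (q : σ) (S : Finset σ) (s t : σ) :
    pathLang M (insert q S) s t =
      pathLang M S s t + pathLang M S s q * (pathLang M S q q)∗ * pathLang M S q t := by
  apply le_antisymm
  · intro w hw
    exact path_insert_le M q S t w.length w le_rfl s hw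
  · intro w hw
    have hq : q ∈ insert q S := Finset.mem_insert_self q S
    rcases (Language.mem_add _ _ _).1 hw with h | h
    · exact pathLang_mono M (Finset.subset_insert q S) s t h
    · obtain ⟨ab, ⟨x, hx, m, hm, rfl⟩, y, hy, rfl⟩ := Language.mem_mul.1 h
      have hx' : x ∈ pathLang M (insert q S) s q :=
        pathLang_mono M (Finset.subset_insert q S) s q hx
      have hm' : m ∈ pathLang M (insert q S) q q :=
        kstar_pathLang_le hq (kstar_mono (pathLang_mono M (Finset.subset_insert q S) q q) hm)
      have hy' : y ∈ pathLang M (insert q S) q t :=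
        pathLang_mono M (Finset.subset_insert q S) q t hy
      exact glue_pathLang hq (glue_pathLang hq hx' hm') hy'

lemma mem_pathLang_empty {M : DFA α σ} {s t : σ} {w : List α} :
    w ∈ pathLang M ∅ s t ↔ (w = [] ∧ s = t) ∨ ∃ a, w = [a] ∧ M.step s a = t := by
  constructor
  · intro hw
    match w with
    | [] => exact Or.inl ⟨rfl, hw.1⟩
    | [a] => exact Or.inr ⟨a, rfl, hw.1⟩
    | a :: b :: l =>
      exfalso
      have : [a] <+: a :: b :: l := ⟨b :: l, rfl⟩
      have h := hw.2 [a] this (by simp) (by simp)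
      simpa using h
  · rintro (⟨rfl, rfl⟩ | ⟨a, rfl, ha⟩)
    · exact nil_mem_pathLang M ∅ s
    · refine ⟨by simpa using ha, ?_⟩
      intro v hpre hne hnev
      exfalso
      obtain ⟨r, hr⟩ := hpre
      cases v with
      | nil => exact hne rfl
      | cons c v' =>
        rw [List.cons_append] at hr
        injection hr with h1 h2
        obtain ⟨rfl, rfl⟩ := List.append_eq_nil_iff.1 h2
        exact hnev (by rw [h1])

lemma fuf_pathLang [Fintype α] (M : DFA α σ) (S : Finset σ) :
    ∀ s t : σ, FUF (pathLang M S s t) := by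
  classical
  induction S using Finset.induction_on with
  | empty =>
    intro s t
    refine ⟨(if s = t then [(1 : Language α)] else [(0 : Language α)]) ++
      ((Finset.univ.filter fun a => M.step s a = t).toList.map
        fun a => ({[a]} : Language α)), ?_, ?_, ?_⟩
    · by_cases h : s = t <;> simp [h]
    · intro A hA
      rcases List.mem_append.1 hA with h | h
      · by_cases h' : s = t <;> simp [h'] at h <;> simp [h, uf_one, uf_zero]
      · obtain ⟨a, _, rfl⟩ := List.mem_map.1 h
        exact uf_char a
    · ext w
      rw [mem_pathLang_empty, mem_list_sum]
      constructor
      · rintro (⟨rfl, rfl⟩ | ⟨a, rfl, ha⟩)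
        · exact ⟨1, by simp, by simp [Language.mem_one]⟩
        · refine ⟨{[a]}, ?_, rfl⟩
          refine List.mem_append.2 (Or.inr (List.mem_map.2 ⟨a, ?_, rfl⟩))
          simp [ha]
      · rintro ⟨A, hA, hwA⟩
        rcases List.mem_append.1 hA with h | h
        · by_cases h' : s = t
          · simp [h'] at h
            subst h
            exact Or.inl ⟨(Language.mem_one w).1 hwA, h'⟩
          · simp [h'] at h
            subst h
            exact absurd hwA (Language.notMem_zero w)
        · obtain ⟨a, ha, rfl⟩ := List.mem_map.1 h
          simp only [Finset.mem_toList, Finset.mem_filter] at ha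
          exact Or.inr ⟨a, hwA, ha.2⟩
  | insert _ _ hq ih =>
    intro s t
    rw [path_insert_eq]
    exact fuf_add (ih s t) (fuf_mul (fuf_mul (ih _ _) (fuf_kstar (ih _ _))) (ih _ _))

lemma mem_pathLang_univ {M : DFA α σ} [Fintype σ] {s t : σ} {w : List α} :
    w ∈ pathLang M Finset.univ s t ↔ M.evalFrom s w = t := by
  constructor
  · exact fun h => h.1
  · exact fun h => ⟨h, fun _ _ _ _ => Finset.mem_univ _⟩

lemma fuf_of_regular [Fintype α] {L : Language α} (hL : L.IsRegular) : FUF L := by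
  classical
  obtain ⟨σ, hfin, M, rfl⟩ := hL
  have key : M.accepts =
      ((Finset.univ.filter fun t => t ∈ M.accept).toList.map
        fun t => pathLang M Finset.univ M.start t).sum := by
    ext w
    rw [DFA.mem_accepts, mem_list_sum]
    constructor
    · intro h
      exact ⟨pathLang M Finset.univ M.start (M.eval w),
        List.mem_map.2 ⟨M.eval w, by simp [h], rfl⟩, mem_pathLang_univ.2 rfl⟩
    · rintro ⟨A, hA, hwA⟩
      obtain ⟨t, ht, rfl⟩ := List.mem_map.1 hA
      simp only [Finset.mem_toList, Finset.mem_filter] at ht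
      have := mem_pathLang_univ.1 hwA
      show M.evalFrom M.start w ∈ M.accept
      rw [this]
      exact ht.2
  rw [key]
  generalize (Finset.univ.filter fun t => t ∈ M.accept).toList = ts
  induction ts with
  | nil => simpa using fuf_zero
  | cons t ts ih =>
    rw [List.map_cons, List.sum_cons]
    exact fuf_add (fuf_pathLang M Finset.univ M.start t) ih

end DFAPart

/-- Every two-sided comet `E·G∗·H` is a finite union of languages `Eᵢ·G∗·H`
with union-free languages `Eᵢ`. -/
theorem twoComet_unionFree_decomposition [Fintype α] (E G H : Language α)
    (hE : E.IsRegular) (hG : G.IsRegular) (hH : H.IsRegular) :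
    ∃ n : ℕ, 1 ≤ n ∧ ∃ Es : Fin n → Language α,
      (∀ i, IsUnionFree (Es i)) ∧ E * G∗ * H = ⋃ i, Es i * G∗ * H := by
  obtain ⟨l, hl0, hufl, rfl⟩ := fuf_of_regular hE
  refine ⟨l.length, List.length_pos_iff.2 hl0, fun i => l.get i, fun i => hufl _ (l.get_mem i), ?_⟩
  ext w
  constructor
  · rintro ⟨d, ⟨a, ha, b, hb, rfl⟩, c, hc, rfl⟩
    obtain ⟨A, hAl, haA⟩ := mem_list_sum.1 ha
    obtain ⟨i, rfl⟩ := List.mem_iff_get.1 hAl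
    exact Set.mem_iUnion.2 ⟨i, Language.append_mem_mul
      (Language.append_mem_mul haA hb) hc⟩
  · intro hw
    obtain ⟨i, hi⟩ := Set.mem_iUnion.1 hw
    obtain ⟨d, ⟨a, ha, b, hb, rfl⟩, c, hc, rfl⟩ := hi
    exact Language.append_mem_mul
      (Language.append_mem_mul (le_list_sum (l.get_mem i) ha) hb) hc
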